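/- For all nonnegative integers x and y with x < y, one has S_{3,1}([x, y)) = S_{3,0}([x, y)) − S_{3,0}([2x, 2y)). -/

import Mathlib

/-- binary digit sum -/
def sigma2 (n : ℕ) : ℕ := (Nat.digits 2 n).sum

/-- `S m l x = Σ_{0 ≤ n < x, n ≡ l (mod m)} (−1)^{σ(n)}` -/
def S (m l x : ℕ) : ℤ :=
  ∑ n ∈ (Finset.range x).filter (fun n => n % m = l), (-1 : ℤ) ^ sigma2 n

/-- `Sint m l x y = S_{m,l}([x,y)) = S_{m,l}(y) − S_{m,l}(x)` -/
def Sint (m l x y : ℕ) : ℤ := S m l y - S m l x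

lemma sigma2_two_mul (k : ℕ) : sigma2 (2 * k) = sigma2 k := by
  rcases Nat.eq_zero_or_pos k with h | h
  · simp [h]
  · unfold sigma2
    rw [Nat.digits_def' (by norm_num : 1 < 2) (by omega)]
    simp [Nat.mul_div_cancel_left, Nat.mul_mod_right]

lemma sigma2_two_mul_add_one (k : ℕ) : sigma2 (2 * k + 1) = sigma2 k + 1 := by
  unfold sigma2
  rw [Nat.digits_def' (by norm_num : 1 < 2) (by omega)]
  have h1 : (2 * k + 1) % 2 = 1 := by omega
  have h2 : (2 * k + 1) / 2 = k := by omega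
  rw [h1, h2]
  simp [Nat.add_comm]

lemma S_succ (m l x : ℕ) :
    S m l (x + 1) = S m l x + if x % m = l then (-1 : ℤ) ^ sigma2 x else 0 := by
  unfold S
  rw [Finset.range_add_one, Finset.filter_insert]
  split_ifs with h
  · rw [Finset.sum_insert (by simp)]; ring
  · ring

lemma key (x : ℕ) : S 3 0 (2 * x) = S 3 0 x - S 3 1 x := by
  induction x with
  | zero => simp [S]
  | succ n ih =>
    have h2 : 2 * (n + 1) = (2 * n + 1) + 1 := by ring
    rw [h2, S_succ]
    rw [show S 3 0 (2 * n + 1) = S 3 0 (2 * n) + if (2 * n) % 3 = 0 then (-1 : ℤ) ^ sigma2 (2 * n) else 0 from S_succ 3 0 (2 * n)]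
    rw [S_succ 3 0 n, S_succ 3 1 n, ih, sigma2_two_mul, sigma2_two_mul_add_one]
    have h3 : n % 3 = 0 ∨ n % 3 = 1 ∨ n % 3 = 2 := by omega
    rcases h3 with h | h | h
    · have ha : (2 * n) % 3 = 0 := by omega
      have hb : (2 * n + 1) % 3 ≠ 0 := by omega
      simp [h, ha, hb]; ring
    · have ha : (2 * n) % 3 ≠ 0 := by omega
      have hb : (2 * n + 1) % 3 = 0 := by omega
      simp [h, ha, hb, pow_succ]
      ring
    · have ha : (2 * n) % 3 ≠ 0 := by omega
      have hb : (2 * n + 1) % 3 ≠ 0 := by omega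
      simp [h, ha, hb]

theorem stmt_10 (x y : ℕ) (hxy : x < y) :
    Sint 3 1 x y = Sint 3 0 x y - Sint 3 0 (2 * x) (2 * y) := by
  unfold Sint
  rw [key, key]
  ring
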